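/- The field 𝔽_{q^n}, viewed as a vector space over 𝔽_{q^t}, is the direct sum of ker L and ker M, and also the direct sum of the image of L and the image of M; in particular ker L ∩ ker M = {0}, every element of 𝔽_{q^n} is the sum of an element of ker L and an element of ker M, im L ∩ im M = {0}, and every element of 𝔽_{q^n} is the sum of an element of im L and an element of im M. -/

import Mathlib

/-- The map `L(x) = x^q - h^{1-q^{t+1}} x^{q^{t+1}}`, with `h^{1-q^j} = h / h^{q^j}`. -/
def Lmap {F : Type*} [Field F] (q t : ℕ) (h : F) (x : F) : F :=
  x ^ q - h / h ^ q ^ (t + 1) * x ^ q ^ (t + 1)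

/-- The map `M(x) = x^{q^{t-1}} + h^{1-q^{2t-1}} x^{q^{2t-1}}`, with `h^{1-q^j} = h / h^{q^j}`. -/
def Mmap {F : Type*} [Field F] (q t : ℕ) (h : F) (x : F) : F :=
  x ^ q ^ (t - 1) + h / h ^ q ^ (2 * t - 1) * x ^ q ^ (2 * t - 1)

private lemma eigen_decomp {F : Type*} [Field F] (S : ℕ)
    (frobsub : ∀ x y : F, (x - y) ^ S = x ^ S - y ^ S)
    (l1 l2 : F) (h1 : l1 ≠ 0) (h2 : l2 ≠ 0) (hne : l1 ≠ l2)
    (n1 : l1 ^ S = l1⁻¹) (n2 : l2 ^ S = l2⁻¹)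
    (x : F) (hx : (x ^ S) ^ S = x) :
    ∃ u v : F, u ^ S = l1 * u ∧ v ^ S = l2 * v ∧ x = u + v := by
  have hD : l2 - l1 ≠ 0 := sub_ne_zero.mpr (Ne.symm hne)
  have hDi : l2⁻¹ - l1⁻¹ ≠ 0 := by
    intro hc
    exact hne (inv_injective (sub_eq_zero.mp hc)).symm
  refine ⟨(l2 * x - x ^ S) / (l2 - l1), (x ^ S - l1 * x) / (l2 - l1), ?_, ?_, ?_⟩
  · rw [div_pow, frobsub, mul_pow, hx, frobsub, n1, n2, ← mul_div_assoc,
      div_eq_div_iff hDi hD]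
    field_simp
    ring
  · rw [div_pow, frobsub, mul_pow, hx, frobsub, n1, n2, ← mul_div_assoc,
      div_eq_div_iff hDi hD]
    field_simp
    ring
  · rw [← add_div, eq_div_iff hD]
    ring

/-- `𝔽_{q^n} = ker L ⊕ ker M = im L ⊕ im M` (as `𝔽_{q^t}`-vector spaces): the kernels
intersect trivially and sum to everything, and likewise for the images. -/
theorem stmt2 (p r q t : ℕ) (hp : p.Prime) (hpodd : Odd p) (hr : 0 < r)
    (hq : q = p ^ r) (ht : 3 ≤ t)
    (F : Type*) [Field F] [Fintype F] (hcard : Fintype.card F = q ^ (2 * t))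
    (h : F) (hh : h ^ (q ^ t + 1) = -1) :
    (∀ x : F, Lmap q t h x = 0 → Mmap q t h x = 0 → x = 0) ∧
    (∀ x : F, ∃ u v : F, Lmap q t h u = 0 ∧ Mmap q t h v = 0 ∧ x = u + v) ∧
    (∀ z : F, (∃ x : F, Lmap q t h x = z) → (∃ y : F, Mmap q t h y = z) → z = 0) ∧
    (∀ z : F, ∃ z₁ z₂ : F, (∃ x : F, Lmap q t h x = z₁) ∧ (∃ y : F, Mmap q t h y = z₂) ∧
      z = z₁ + z₂) := by
  haveI hpfact : Fact p.Prime := ⟨hp⟩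
  have qodd : Odd q := hq ▸ hpodd.pow
  have hchar : CharP F p := by
    have h1 := ringChar.charP F
    obtain ⟨n, hcprime, hcn⟩ := FiniteField.card F (ringChar F)
    have hdvd : ringChar F ∣ p := by
      have hd : ringChar F ∣ Fintype.card F := hcn ▸ dvd_pow_self _ n.pos.ne'
      rw [hcard, hq, ← pow_mul] at hd
      exact hcprime.dvd_of_dvd_pow hd
    have he : ringChar F = p := (Nat.prime_dvd_prime_iff_eq hcprime hp).mp hdvd
    exact he ▸ h1
  set S := q ^ t with hSdef
  set E := q ^ (t - 1) with hEdef
  have hEq : E * q = S := by rw [hEdef, hSdef, ← pow_succ]; congr 1; omega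
  have hqE : q * E = S := by rw [mul_comm]; exact hEq
  have ht1 : q ^ (t + 1) = S * q := by rw [hSdef, ← pow_succ]
  have ht2 : q ^ (2 * t - 1) = S * E := by rw [hSdef, hEdef, ← pow_add]; congr 1; omega
  have hSpp : S = p ^ (r * t) := by rw [hSdef, hq, ← pow_mul]
  have hSS : S * S = Fintype.card F := by rw [hcard, hSdef, ← pow_add]; congr 1; ring
  have hF1 : ∀ w : F, (w ^ S) ^ S = w := by
    intro w; rw [← pow_mul, hSS]; exact FiniteField.pow_card w
  have frobsub : ∀ x y : F, (x - y) ^ S = x ^ S - y ^ S := by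
    intro x y; rw [hSpp]; exact sub_pow_char_pow x y (r * t)
  have frobadd : ∀ x y : F, (x + y) ^ S = x ^ S + y ^ S := by
    intro x y; rw [hSpp]; exact add_pow_char_pow x y p (r * t)
  have Sodd : Odd S := qodd.pow
  have Eodd : Odd E := qodd.pow
  have h0 : h ≠ 0 := by
    intro hc
    rw [hc, zero_pow (by omega : S + 1 ≠ 0)] at hh
    exact one_ne_zero (α := F) (by linear_combination hh)
  have hhS : h ^ S * h = -1 := by rw [← pow_succ]; exact hh
  have two0 : (2 : F) ≠ 0 := by
    intro hc
    have h2 : ((2 : ℕ) : F) = 0 := by exact_mod_cast hc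
    have hd := (CharP.cast_eq_zero_iff F p 2).mp h2
    have : p = 2 := (Nat.prime_dvd_prime_iff_eq hp Nat.prime_two).mp hd
    rw [this] at hpodd
    exact (by decide : ¬ Odd 2) hpodd
  have two_pow : (2 : F) ^ S = 2 := by
    have e : (2 : F) = 1 + 1 := by norm_num
    rw [e, frobadd, one_pow]
  have hS : h ^ S = -h⁻¹ := by
    field_simp
    linear_combination hhS
  have hSq : (h ^ S) ^ q = -(h ^ q)⁻¹ := by rw [hS, Odd.neg_pow qodd, inv_pow]
  have hSE : (h ^ S) ^ E = -(h ^ E)⁻¹ := by rw [hS, Odd.neg_pow Eodd, inv_pow]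
  have KEY : h ^ E ≠ -h ^ q := by
    intro hcon
    have lhs : ((h ^ E) ^ S) ^ q = h := by
      rw [← pow_mul, ← pow_mul, show E * (S * q) = E * q * S by ring, hEq, pow_mul]
      exact hF1 h
    have rhs : ((-h ^ q) ^ S) ^ q = (h ^ (q * q))⁻¹ := by
      rw [Odd.neg_pow Sodd,
        show (h ^ q) ^ S = (h ^ S) ^ q by rw [← pow_mul, ← pow_mul, mul_comm],
        hSq, neg_neg, inv_pow, ← pow_mul]
    have e1 : ((h ^ E) ^ S) ^ q = ((-h ^ q) ^ S) ^ q := by rw [hcon]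
    rw [lhs, rhs] at e1
    have hQ2 : h ^ (q * q) = h⁻¹ := by
      have e2 := congrArg Inv.inv e1
      rw [inv_inv] at e2
      exact e2.symm
    have cyc : ∀ j : ℕ, h ^ q ^ j = h ∨ h ^ q ^ j = h ^ q ∨ h ^ q ^ j = h⁻¹ ∨
        h ^ q ^ j = (h ^ q)⁻¹ := by
      intro j
      induction j with
      | zero => left; simp
      | succ j ih =>
        have step : h ^ q ^ (j + 1) = (h ^ q ^ j) ^ q := by rw [← pow_mul, pow_succ]
        rcases ih with e | e | e | e
        · right; left; rw [step, e]
        · right; right; left; rw [step, e, ← pow_mul]; exact hQ2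
        · right; right; right; rw [step, e, inv_pow]
        · left; rw [step, e, inv_pow, ← pow_mul, hQ2, inv_inv]
    have hcyc := cyc t
    rw [← hSdef, hS] at hcyc
    rcases hcyc with e | e | e | e
    · have hh2 : h * h = -1 := by
        have e2 := congrArg (· * h) e
        simp only [neg_mul, inv_mul_cancel₀ h0] at e2
        exact e2.symm
      obtain ⟨a, ha⟩ := qodd
      have h4 : h ^ 4 = 1 := by
        have e4 : h ^ 4 = (h * h) * (h * h) := by ring
        rw [e4, hh2]; norm_num
      have hqq2 : h ^ (q * q) = h := by
        rw [show q * q = 4 * (a * a + a) + 1 by rw [ha]; ring, pow_succ, pow_mul, h4,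
          one_pow, one_mul]
      have heq : h⁻¹ = h := hQ2.symm.trans hqq2
      have e2 := congrArg (· * h) heq
      simp only [inv_mul_cancel₀ h0] at e2
      rw [hh2] at e2
      exact two0 (by linear_combination e2)
    · have hqq2 : h ^ (q * q) = h := by
        rw [pow_mul, ← e, Odd.neg_pow qodd, inv_pow, ← e, inv_neg, inv_inv, neg_neg]
      have heq : h⁻¹ = h := hQ2.symm.trans hqq2
      have e2 := congrArg (· * h) heq
      simp only [inv_mul_cancel₀ h0] at e2
      rcases mul_self_eq_one_iff.mp e2.symm with h1' | h1'
      · rw [h1'] at e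
        simp only [inv_one, one_pow] at e
        exact two0 (by linear_combination -e)
      · rw [h1'] at e
        simp only [inv_neg, inv_one, neg_neg, Odd.neg_pow qodd, one_pow] at e
        exact two0 (by linear_combination e)
    · have e2 : (2 : F) * h⁻¹ = 0 := by linear_combination -e
      rcases mul_eq_zero.mp e2 with hc | hc
      · exact two0 hc
      · exact h0 (inv_eq_zero.mp hc)
    · have hqneg : h ^ q = -h := by
        have e3 : ((h ^ q)⁻¹ : F) = (-h)⁻¹ := by rw [inv_neg, ← e]
        exact inv_injective e3
      have hqq2 : h ^ (q * q) = h := by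
        rw [pow_mul, hqneg, Odd.neg_pow qodd, hqneg, neg_neg]
      have heq : h⁻¹ = h := hQ2.symm.trans hqq2
      have e2 := congrArg (· * h) heq
      simp only [inv_mul_cancel₀ h0] at e2
      rcases mul_self_eq_one_iff.mp e2.symm with h1' | h1'
      · rw [h1'] at hqneg
        simp only [one_pow] at hqneg
        exact two0 (by linear_combination hqneg)
      · rw [h1'] at hqneg
        simp only [Odd.neg_pow qodd, one_pow, neg_neg] at hqneg
        exact two0 (by linear_combination -hqneg)
  have hc_eq : h / h ^ (S * q) = -(h * h ^ q) := by
    rw [pow_mul, hSq, div_neg, div_eq_mul_inv, inv_inv]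
  have hb_eq : h / h ^ (S * E) = -(h * h ^ E) := by
    rw [pow_mul, hSE, div_neg, div_eq_mul_inv, inv_inv]
  have hA : h * h⁻¹ = 1 := mul_inv_cancel₀ h0
  have hBq : h ^ q * (h ^ q)⁻¹ = 1 := mul_inv_cancel₀ (pow_ne_zero _ h0)
  have hBE : h ^ E * (h ^ E)⁻¹ = 1 := mul_inv_cancel₀ (pow_ne_zero _ h0)
  have hDq : (h ^ q * h) * (h ^ q * h)⁻¹ = 1 :=
    mul_inv_cancel₀ (mul_ne_zero (pow_ne_zero _ h0) h0)
  have hDE : (h ^ E * h) * (h ^ E * h)⁻¹ = 1 :=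
    mul_inv_cancel₀ (mul_ne_zero (pow_ne_zero _ h0) h0)
  have h2i : (2 : F) * 2⁻¹ = 1 := mul_inv_cancel₀ two0
  have cancel_h : ∀ a b : F, a * h⁻¹ = -(b * h⁻¹) → a = -b := by
    intro a b hab
    have e6 := congrArg (· * h) hab
    simp only [neg_mul] at e6
    rw [mul_assoc, inv_mul_cancel₀ h0, mul_one, mul_assoc, inv_mul_cancel₀ h0, mul_one] at e6
    exact e6
  have ker_char_L : ∀ x : F, Lmap q t h x = 0 → x ^ S = h ^ E * h⁻¹ * x := by
    intro x hL
    unfold Lmap at hL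
    rw [ht1] at hL
    have hx : x ^ q = h / h ^ (S * q) * x ^ (S * q) := sub_eq_zero.mp hL
    have p1 : (x ^ (S * q)) ^ E = x := by
      rw [← pow_mul, show S * q * E = S * S by rw [mul_assoc, hqE], pow_mul]
      exact hF1 x
    have p2 : (h ^ (S * q)) ^ E = h := by
      rw [← pow_mul, show S * q * E = S * S by rw [mul_assoc, hqE], pow_mul]
      exact hF1 h
    have p3 : (x ^ q) ^ E = x ^ S := by rw [← pow_mul, hqE]
    calc x ^ S = (x ^ q) ^ E := p3.symm
      _ = (h / h ^ (S * q) * x ^ (S * q)) ^ E := by rw [hx]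
      _ = h ^ E / h * x := by rw [mul_pow, div_pow, p1, p2]
      _ = h ^ E * h⁻¹ * x := by rw [div_eq_mul_inv]
  have ker_char_M : ∀ x : F, Mmap q t h x = 0 → x ^ S = -(h ^ q * h⁻¹) * x := by
    intro x hM
    unfold Mmap at hM
    rw [ht2, ← hEdef] at hM
    have hx : x ^ E = -(h / h ^ (S * E) * x ^ (S * E)) := by linear_combination hM
    have p1 : (x ^ (S * E)) ^ q = x := by
      rw [← pow_mul, show S * E * q = S * S by rw [mul_assoc, hEq], pow_mul]
      exact hF1 x
    have p2 : (h ^ (S * E)) ^ q = h := by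
      rw [← pow_mul, show S * E * q = S * S by rw [mul_assoc, hEq], pow_mul]
      exact hF1 h
    have p3 : (x ^ E) ^ q = x ^ S := by rw [← pow_mul, hEq]
    calc x ^ S = (x ^ E) ^ q := p3.symm
      _ = (-(h / h ^ (S * E) * x ^ (S * E))) ^ q := by rw [hx]
      _ = -(h ^ q / h * x) := by rw [Odd.neg_pow qodd, mul_pow, div_pow, p1, p2]
      _ = -(h ^ q * h⁻¹) * x := by rw [div_eq_mul_inv]; ring
  have part1 : ∀ x : F, Lmap q t h x = 0 → Mmap q t h x = 0 → x = 0 := by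
    intro x hL hM
    by_contra hx0
    have e1 := (ker_char_L x hL).symm.trans (ker_char_M x hM)
    have e2 : h ^ E * h⁻¹ = -(h ^ q * h⁻¹) := mul_right_cancel₀ hx0 e1
    exact KEY (cancel_h _ _ e2)
  have part2 : ∀ x : F, ∃ u v : F, Lmap q t h u = 0 ∧ Mmap q t h v = 0 ∧ x = u + v := by
    intro x
    have l1_0 : h ^ E * h⁻¹ ≠ 0 := mul_ne_zero (pow_ne_zero _ h0) (inv_ne_zero h0)
    have l2_0 : -(h ^ q * h⁻¹) ≠ 0 :=
      neg_ne_zero.mpr (mul_ne_zero (pow_ne_zero _ h0) (inv_ne_zero h0))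
    have lne : h ^ E * h⁻¹ ≠ -(h ^ q * h⁻¹) := fun hc => KEY (cancel_h _ _ hc)
    have n1 : (h ^ E * h⁻¹) ^ S = (h ^ E * h⁻¹)⁻¹ := by
      apply eq_inv_of_mul_eq_one_left
      rw [mul_pow, inv_pow,
        show (h ^ E) ^ S = (h ^ S) ^ E by rw [← pow_mul, ← pow_mul, mul_comm],
        hSE, hS, inv_neg, inv_inv]
      linear_combination (h ^ E * (h ^ E)⁻¹) * hA + hBE
    have n2 : (-(h ^ q * h⁻¹)) ^ S = (-(h ^ q * h⁻¹))⁻¹ := by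
      apply eq_inv_of_mul_eq_one_left
      rw [Odd.neg_pow Sodd, mul_pow, inv_pow,
        show (h ^ q) ^ S = (h ^ S) ^ q by rw [← pow_mul, ← pow_mul, mul_comm],
        hSq, hS, inv_neg, inv_inv]
      linear_combination (h ^ q * (h ^ q)⁻¹) * hA + hBq
    obtain ⟨u, v, hu, hv, hx⟩ := eigen_decomp S frobsub _ _ l1_0 l2_0 lne n1 n2 x (hF1 x)
    refine ⟨u, v, ?_, ?_, hx⟩
    · unfold Lmap
      rw [ht1]
      have pu : u ^ (S * q) = (h ^ E * h⁻¹) ^ q * u ^ q := by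
        rw [pow_mul, hu, mul_pow]
      rw [pu, hc_eq]
      have hcoef : -(h * h ^ q) * ((h ^ E * h⁻¹) ^ q * u ^ q) = u ^ q := by
        rw [mul_pow, inv_pow, ← pow_mul, hEq, hS]
        linear_combination (u ^ q * (h ^ q * (h ^ q)⁻¹)) * hA + u ^ q * hBq
      rw [hcoef, sub_self]
    · unfold Mmap
      rw [ht2, ← hEdef]
      have pv : v ^ (S * E) = (-(h ^ q * h⁻¹)) ^ E * v ^ E := by
        rw [pow_mul, hv, mul_pow]
      rw [pv, hb_eq]
      have hcoef : -(h * h ^ E) * ((-(h ^ q * h⁻¹)) ^ E * v ^ E) = -(v ^ E) := by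
        rw [Odd.neg_pow Eodd, mul_pow, inv_pow, ← pow_mul, hqE, hS]
        linear_combination (-(v ^ E) * (h ^ E * (h ^ E)⁻¹)) * hA + (-(v ^ E)) * hBE
      rw [hcoef]
      ring
  have im_char_L : ∀ x : F, (Lmap q t h x) ^ S = (h ^ q * h)⁻¹ * Lmap q t h x := by
    intro x
    unfold Lmap
    rw [ht1]
    have P1 : (x ^ q) ^ S = x ^ (S * q) := by rw [← pow_mul, mul_comm]
    have P2 : (x ^ (S * q)) ^ S = x ^ q := by
      rw [← pow_mul, show S * q * S = S * S * q by ring, pow_mul, pow_mul, hF1]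
    have P3 : (h ^ (S * q)) ^ S = h ^ q := by
      rw [← pow_mul, show S * q * S = S * S * q by ring, pow_mul, pow_mul, hF1]
    rw [frobsub, mul_pow, div_pow, P1, P2, P3, hS, hc_eq]
    linear_combination (-(x ^ (S * q)) - x ^ q * (h⁻¹ * (h ^ q)⁻¹)) * hDq +
      (x ^ q * ((h ^ q * h)⁻¹ * ((h ^ q)⁻¹ * h ^ q))) * hA + (x ^ q * (h ^ q * h)⁻¹) * hBq
  have im_char_M : ∀ y : F, (Mmap q t h y) ^ S = -(h ^ E * h)⁻¹ * Mmap q t h y := by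
    intro y
    unfold Mmap
    rw [ht2, ← hEdef]
    have P1 : (y ^ E) ^ S = y ^ (S * E) := by rw [← pow_mul, mul_comm]
    have P2 : (y ^ (S * E)) ^ S = y ^ E := by
      rw [← pow_mul, show S * E * S = S * S * E by ring, pow_mul, pow_mul, hF1]
    have P3 : (h ^ (S * E)) ^ S = h ^ E := by
      rw [← pow_mul, show S * E * S = S * S * E by ring, pow_mul, pow_mul, hF1]
    rw [frobadd, mul_pow, div_pow, P1, P2, P3, hS, hb_eq]
    linear_combination (-(y ^ (S * E)) + y ^ E * (h⁻¹ * (h ^ E)⁻¹)) * hDE +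
      (-(y ^ E) * ((h ^ E * h)⁻¹ * ((h ^ E)⁻¹ * h ^ E))) * hA +
      (-(y ^ E) * (h ^ E * h)⁻¹) * hBE
  have part3 : ∀ z : F, (∃ x : F, Lmap q t h x = z) → (∃ y : F, Mmap q t h y = z) → z = 0 := by
    rintro z ⟨x, hx⟩ ⟨y, hy⟩
    by_contra hz0
    have e1 := im_char_L x
    rw [hx] at e1
    have e2 := im_char_M y
    rw [hy] at e2
    have e3 : (h ^ q * h)⁻¹ = -(h ^ E * h)⁻¹ := mul_right_cancel₀ hz0 (e1.symm.trans e2)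
    apply KEY
    have e4 := congrArg Inv.inv e3
    rw [inv_inv, inv_neg, inv_inv] at e4
    have e5 : h ^ q = -(h ^ E) := by
      have e6 : h ^ q * h = -(h ^ E) * h := by rw [neg_mul]; exact e4
      exact mul_right_cancel₀ h0 e6
    linear_combination e5
  have part4 : ∀ z : F, ∃ z₁ z₂ : F, (∃ x : F, Lmap q t h x = z₁) ∧
      (∃ y : F, Mmap q t h y = z₂) ∧ z = z₁ + z₂ := by
    intro z
    have m1_0 : (h ^ q * h)⁻¹ ≠ 0 := inv_ne_zero (mul_ne_zero (pow_ne_zero _ h0) h0)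
    have m2_0 : -(h ^ E * h)⁻¹ ≠ 0 :=
      neg_ne_zero.mpr (inv_ne_zero (mul_ne_zero (pow_ne_zero _ h0) h0))
    have mne : (h ^ q * h)⁻¹ ≠ -(h ^ E * h)⁻¹ := by
      intro hc
      apply KEY
      have e4 := congrArg Inv.inv hc
      rw [inv_inv, inv_neg, inv_inv] at e4
      have e5 : h ^ q = -(h ^ E) := by
        have e6 : h ^ q * h = -(h ^ E) * h := by rw [neg_mul]; exact e4
        exact mul_right_cancel₀ h0 e6
      linear_combination e5
    have nm1 : ((h ^ q * h)⁻¹) ^ S = ((h ^ q * h)⁻¹)⁻¹ := by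
      apply eq_inv_of_mul_eq_one_left
      rw [inv_pow, mul_pow,
        show (h ^ q) ^ S = (h ^ S) ^ q by rw [← pow_mul, ← pow_mul, mul_comm],
        hSq, hS]
      simp only [neg_mul_neg, mul_inv_rev, inv_inv]
      linear_combination (h ^ q * (h ^ q)⁻¹) * hA + hBq
    have nm2 : (-(h ^ E * h)⁻¹) ^ S = (-(h ^ E * h)⁻¹)⁻¹ := by
      apply eq_inv_of_mul_eq_one_left
      rw [Odd.neg_pow Sodd, inv_pow, mul_pow,
        show (h ^ E) ^ S = (h ^ S) ^ E by rw [← pow_mul, ← pow_mul, mul_comm],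
        hSE, hS]
      simp only [neg_mul_neg, mul_inv_rev, inv_inv, inv_neg, neg_mul, mul_neg, neg_neg]
      linear_combination (h ^ E * (h ^ E)⁻¹) * hA + hBE
    obtain ⟨z₁, z₂, hz1, hz2, hz⟩ := eigen_decomp S frobsub _ _ m1_0 m2_0 mne nm1 nm2 z (hF1 z)
    refine ⟨z₁, z₂, ⟨((z₁ / 2) ^ S) ^ E, ?_⟩, ⟨((z₂ / 2) ^ S) ^ q, ?_⟩, hz⟩
    · unfold Lmap
      rw [ht1]
      have A1 : (((z₁ / 2) ^ S) ^ E) ^ q = z₁ / 2 := by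
        rw [← pow_mul, hEq]; exact hF1 _
      have A2 : (((z₁ / 2) ^ S) ^ E) ^ (S * q) = (h ^ q * h)⁻¹ * z₁ / 2 := by
        rw [← pow_mul, ← pow_mul, show S * (E * (S * q)) = S * S * S by rw [← hEq]; ring,
          pow_mul, pow_mul, hF1, div_pow, two_pow, hz1]
      rw [A1, A2, hc_eq]
      linear_combination (z₁ / 2) * hDq + z₁ * h2i
    · unfold Mmap
      rw [ht2, ← hEdef]
      have B1 : (((z₂ / 2) ^ S) ^ q) ^ E = z₂ / 2 := by
        rw [← pow_mul, hqE]; exact hF1 _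
      have B2 : (((z₂ / 2) ^ S) ^ q) ^ (S * E) = -(h ^ E * h)⁻¹ * z₂ / 2 := by
        rw [← pow_mul, ← pow_mul, show S * (q * (S * E)) = S * S * S by rw [← hEq]; ring,
          pow_mul, pow_mul, hF1, div_pow, two_pow, hz2]
      rw [B1, B2, hb_eq]
      linear_combination (z₂ / 2) * hDE + z₂ * h2i
  exact ⟨part1, part2, part3, part4⟩
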